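/- Let v be a monotone TU-game on N, S ⊆ N with |S| ≥ 2, T ⊆ N∖S, and suppose v(S∪T) > v(T) (S is T-contributing). Let p_S be a probability distribution with full support on the unordered 2-partitions of S. Then the attitude A^v_p(S,T) equals v(S∪T) - v(T) if and only if v(P∪T) = v(T) for every proper nonempty subcoalition P ⊊ S (i.e., S is an essential T-contributing coalition). -/
import Mathlib


open Finset

/-- The set of unordered 2-partitions of `S` into two nonempty disjoint parts. -/
def Pi2 {ι : Type*} [DecidableEq ι] (S : Finset ι) : Finset (Finset (Finset ι)) :=
  (S.powerset.filter fun R => R ≠ ∅ ∧ R ≠ S).image fun R => {R, S \ R}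

/-- The attitude of coalition `S` towards `T` under internal distribution `p` on `Pi2 S`. -/
def attitude {ι : Type*} [DecidableEq ι] (v : Finset ι → ℝ) (p : Finset (Finset ι) → ℝ)
    (S T : Finset ι) : ℝ :=
  v (S ∪ T) - v T - ∑ π ∈ Pi2 S, p π * ((∑ B ∈ π, v (B ∪ T)) - 2 * v T)

lemma pair_sum {ι : Type*} [DecidableEq ι] (S R : Finset ι) (f : Finset ι → ℝ)
    (hR : R ⊆ S) (hne : R ≠ ∅) :
    ∑ B ∈ ({R, S \ R} : Finset (Finset ι)), f B = f R + f (S \ R) := by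
  have hRne : R ≠ S \ R := by
    intro h
    apply hne
    have : Disjoint R (S \ R) := disjoint_sdiff
    rw [← h] at this
    exact disjoint_self.mp this
  rw [Finset.sum_pair hRne]

theorem attitude_eq_marginal_iff_essential {ι : Type*} [DecidableEq ι]
    (N S T : Finset ι) (v : Finset ι → ℝ) (p : Finset (Finset ι) → ℝ)
    (hv0 : v ∅ = 0) (hmono : ∀ A B : Finset ι, A ⊆ B → B ⊆ N → v A ≤ v B)
    (hSN : S ⊆ N) (h2 : 2 ≤ S.card) (hT : T ⊆ N \ S)
    (hcontrib : v T < v (S ∪ T))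
    (hp1 : ∑ π ∈ Pi2 S, p π = 1) (hppos : ∀ π ∈ Pi2 S, 0 < p π) :
    attitude v p S T = v (S ∪ T) - v T ↔
      ∀ P : Finset ι, P ⊆ S → P ≠ ∅ → P ≠ S → v (P ∪ T) = v T := by
  have hTN : T ⊆ N := hT.trans (sdiff_subset)
  -- basic monotonicity fact
  have hge : ∀ P : Finset ι, P ⊆ S → v T ≤ v (P ∪ T) := fun P hPS =>
    hmono T (P ∪ T) subset_union_right (union_subset (hPS.trans hSN) hTN)
  -- membership characterization
  have hmem : ∀ π ∈ Pi2 S, ∃ R : Finset ι, R ⊆ S ∧ R ≠ ∅ ∧ R ≠ S ∧ π = {R, S \ R} := by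
    intro π hπ
    simp only [Pi2, mem_image, mem_filter, mem_powerset] at hπ
    obtain ⟨R, ⟨hRS, hRne, hRS'⟩, rfl⟩ := hπ
    exact ⟨R, hRS, hRne, hRS', rfl⟩
  have hsdiff_ne : ∀ R : Finset ι, R ⊆ S → R ≠ ∅ → R ≠ S → S \ R ≠ ∅ ∧ S \ R ≠ S := by
    intro R hRS hne hne'
    constructor
    · intro h
      exact hne' (le_antisymm hRS (sdiff_eq_empty_iff_subset.mp h))
    · intro h
      apply hne
      have : Disjoint R (S \ R) := disjoint_sdiff
      rw [h] at this
      exact disjoint_self.mp (this.mono_right hRS)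
  -- nonnegativity of each term
  have hterm_nonneg : ∀ π ∈ Pi2 S, 0 ≤ p π * ((∑ B ∈ π, v (B ∪ T)) - 2 * v T) := by
    intro π hπ
    obtain ⟨R, hRS, hne, hne', rfl⟩ := hmem π hπ
    rw [pair_sum S R _ hRS hne]
    have h1 := hge R hRS
    have h2 := hge (S \ R) sdiff_subset
    have := (hppos _ hπ).le
    nlinarith
  constructor
  · intro heq P hPS hPne hPneS
    have hsum : ∑ π ∈ Pi2 S, p π * ((∑ B ∈ π, v (B ∪ T)) - 2 * v T) = 0 := by
      unfold attitude at heq; linarith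
    have hzero := (Finset.sum_eq_zero_iff_of_nonneg hterm_nonneg).mp hsum
    have hπmem : ({P, S \ P} : Finset (Finset ι)) ∈ Pi2 S := by
      simp only [Pi2, mem_image, mem_filter, mem_powerset]
      exact ⟨P, ⟨hPS, hPne, hPneS⟩, rfl⟩
    have := hzero _ hπmem
    rw [pair_sum S P _ hPS hPne] at this
    have hp := hppos _ hπmem
    have h1 := hge P hPS
    have h2 := hge (S \ P) sdiff_subset
    have hfac : v (P ∪ T) + v ((S \ P) ∪ T) - 2 * v T = 0 := by
      rcases mul_eq_zero.mp this with h | h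
      · exact absurd h hp.ne'
      · exact h
    linarith
  · intro hess
    have hsum : ∑ π ∈ Pi2 S, p π * ((∑ B ∈ π, v (B ∪ T)) - 2 * v T) = 0 := by
      apply Finset.sum_eq_zero
      intro π hπ
      obtain ⟨R, hRS, hne, hne', rfl⟩ := hmem π hπ
      rw [pair_sum S R _ hRS hne]
      obtain ⟨h1, h2⟩ := hsdiff_ne R hRS hne hne'
      rw [hess R hRS hne hne', hess (S \ R) sdiff_subset h1 h2]
      ring
    unfold attitude
    rw [hsum]
    ring
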